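/- arXiv:2605.20367 — 3 statements merged into one kernel-verified Lean document; each statement's English description precedes it below -/
import Mathlib

section
/- For all constants C_R, C_inv, C_T, C_P > 0 there exists β > 0, depending only on C_R, C_inv, C_T, C_P, such that the following holds. Let h be a real number with 0 < h ≤ 1, let H and B be real inner product spaces, X a linear subspace of H, and c : X → H, t : X → B, s : X → B linear maps. Let M be a complete linear subspace of B, P : B → B the orthogonal projection onto M, and R : B → X a linear map. Assume: (i) for every x ∈ X, c x = 0 implies s x = 0; (ii) for every b ∈ B one has s(R(P b)) = P b, t(R(P b)) = 0, and ‖R(P b)‖_H ≤ C_R · h^{3/2} · ‖P b‖_B; (iii) (inverse inequality) ‖c x‖_H ≤ C_inv · h⁻¹ · ‖x‖_H for every x ∈ X; (iv) (trace Poincaré inequality) ‖t x − P(t x)‖_B ≤ C_T · h^{1/2} · ‖c x‖_H for every x ∈ X; (v) (discrete Poincaré inequality) for every x ∈ X there exists w ∈ X with c w = 0, t w = 0 and ‖x − w‖_H ≤ C_P · |x|ₕ. Then for every u ∈ X there exists v ∈ X such that a(u, v) ≥ β · |u|ₕ · ‖v‖ₕ. -/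
set_option maxHeartbeats 1000000
set_option linter.unusedVariables false


private lemma nitsche_auxA (a m C₁ q A Pn I μ : ℝ)
    (ha : 0 < a) (hm : 0 < m) (hA : 0 ≤ A) (hPn : 0 ≤ Pn)
    (hX : (a*m*C₁*q)^2 = a*m)
    (hI : -(A * (C₁*q*Pn)) ≤ I) (hμ1 : μ ≤ 1/2) (hμ2 : μ ≤ a/2) :
    A^2 + (a*m) * I + (a*m) * Pn^2 ≥ μ * (A^2 + m*Pn^2) := by
  have hkey : a * m * C₁ * q * A * Pn ≤ A^2/2 + a * m * Pn^2/2 := by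
    nlinarith [sq_nonneg (A - a * m * C₁ * q * Pn), hX, sq_nonneg Pn]
  have h1 : (a*m) * (-(A * (C₁ * q * Pn))) ≤ (a*m) * I :=
    mul_le_mul_of_nonneg_left hI (by positivity)
  nlinarith [hkey, h1, sq_nonneg A, mul_nonneg hm.le (sq_nonneg Pn)]

private lemma nitsche_auxB (C_T m q A Pn Tn : ℝ)
    (hCT : 0 < C_T) (hm : 0 < m) (hq : 0 < q) (hmq : m * (q * q) = 1)
    (hA : 0 ≤ A) (hPn : 0 ≤ Pn) (hTn : 0 ≤ Tn)
    (hTnle : Tn ≤ Pn + C_T * q * A) :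
    A^2 + m * Tn^2 ≤ max (1 + 2*C_T^2) 2 * (A^2 + m * Pn^2) := by
  have hTn2 : Tn^2 ≤ (Pn + C_T * q * A)^2 := by nlinarith
  have hmTn2 : m * Tn^2 ≤ m * (Pn + C_T * q * A)^2 :=
    mul_le_mul_of_nonneg_left hTn2 hm.le
  have hqm : C_T^2 * A^2 * (m * (q * q)) = C_T^2 * A^2 := by rw [hmq]; ring
  have key2 : m * (Pn + C_T * q * A)^2 ≤ 2*m*Pn^2 + 2*C_T^2*A^2 := by
    nlinarith [mul_nonneg hm.le (sq_nonneg (Pn - C_T*q*A)), hqm]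
  have hc2a : (1 + 2*C_T^2) ≤ max (1 + 2*C_T^2) 2 := le_max_left _ _
  have hc2b : (2:ℝ) ≤ max (1 + 2*C_T^2) 2 := le_max_right _ _
  nlinarith [hmTn2, key2, sq_nonneg A, mul_nonneg hm.le (sq_nonneg Pn)]

private lemma nitsche_auxD (a m C₁ q A Pn Tn E : ℝ)
    (ha : 0 < a) (hm : 0 < m) (hA : 0 ≤ A) (hPn : 0 ≤ Pn) (hTn : 0 ≤ Tn)
    (hX : (a*m*C₁*q)^2 = a*m)
    (hE0 : 0 ≤ E) (hEb : E ≤ A + a*m*C₁*q*Pn) (hPT : Pn ≤ Tn) :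
    E^2 + m * Tn^2 ≤ (3 + 2*a) * (A^2 + m * Tn^2) := by
  have h6 : E^2 ≤ (A + a*m*C₁*q*Pn)^2 := by
    have h7 : (0:ℝ) ≤ A + a*m*C₁*q*Pn := le_trans hE0 hEb
    nlinarith
  have hE2 : E^2 ≤ 2*A^2 + 2*(a*m)*Pn^2 := by
    nlinarith [h6, sq_nonneg (A - a*m*C₁*q*Pn), hX, sq_nonneg Pn]
  have hPn2 : Pn^2 ≤ Tn^2 := by nlinarith
  have h8 : (a*m) * Pn^2 ≤ (a*m) * Tn^2 :=
    mul_le_mul_of_nonneg_left hPn2 (by positivity)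
  nlinarith [hE2, h8, sq_nonneg A, mul_nonneg hm.le (sq_nonneg Tn),
    mul_nonneg ha.le (mul_nonneg hm.le (sq_nonneg Tn))]

private lemma nitsche_auxT (C_P K N D S : ℝ)
    (hCP : 0 < C_P) (hK : 0 ≤ K) (hD0 : 0 ≤ D) (hS0 : 0 ≤ S)
    (hN2 : N^2 ≤ C_P^2 * D) (hD : D ≤ K * S) :
    N^2 + D ≤ ((C_P^2 + 1) * K) * S := by
  nlinarith [hN2, hD, sq_nonneg C_P, mul_le_mul_of_nonneg_left hD (by positivity : (0:ℝ) ≤ C_P^2 + 1)]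


open scoped RealInnerProductSpace

/-- Abstract inf-sup stability of the penalty-free asymmetric Nitsche bilinear form
`a(u,v) = ⟪c u, c v⟫ − ⟪s u, t v⟫ + ⟪s v, t u⟫` (paper's Lemma 3.8). -/
theorem penalty_free_asymmetric_nitsche_infsup
    (C_R C_inv C_T C_P : ℝ)
    (hCR : 0 < C_R) (hCinv : 0 < C_inv) (hCT : 0 < C_T) (hCP : 0 < C_P) :
    ∃ β : ℝ, 0 < β ∧
      ∀ (h : ℝ), 0 < h → h ≤ 1 →
      ∀ (H : Type) [NormedAddCommGroup H] [InnerProductSpace ℝ H]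
        (B : Type) [NormedAddCommGroup B] [InnerProductSpace ℝ B]
        (X : Submodule ℝ H)
        (c : X →ₗ[ℝ] H) (t : X →ₗ[ℝ] B) (s : X →ₗ[ℝ] B)
        (M : Submodule ℝ B) (P : B →ₗ[ℝ] B) (R : B →ₗ[ℝ] X),
        -- `M` is a complete subspace and `P` is the orthogonal projection onto `M`
        IsComplete (M : Set B) →
        (∀ b : B, P b ∈ M ∧ ∀ z ∈ M, ⟪b - P b, z⟫ = 0) →
        -- (i) the kernel of `c` is contained in the kernel of `s`
        (∀ x : X, c x = 0 → s x = 0) →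
        -- (ii) `R` lifts elements of `M` with the stated properties
        (∀ b : B, s (R (P b)) = P b ∧ t (R (P b)) = 0 ∧
            ‖(R (P b) : H)‖ ≤ C_R * h ^ ((3 : ℝ) / 2) * ‖P b‖) →
        -- (iii) inverse inequality
        (∀ x : X, ‖c x‖ ≤ C_inv * h⁻¹ * ‖(x : H)‖) →
        -- (iv) trace Poincaré inequality
        (∀ x : X, ‖t x - P (t x)‖ ≤ C_T * h ^ ((1 : ℝ) / 2) * ‖c x‖) →
        -- (v) discrete Poincaré inequality
        (∀ x : X, ∃ w : X, c w = 0 ∧ t w = 0 ∧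
            ‖((x - w : X) : H)‖ ≤ C_P * Real.sqrt (‖c x‖ ^ 2 + h⁻¹ * ‖t x‖ ^ 2)) →
        -- conclusion: inf-sup estimate for the asymmetric bilinear form
        ∀ u : X, ∃ v : X,
          ⟪c u, c v⟫ - ⟪s u, t v⟫ + ⟪s v, t u⟫ ≥
            β * Real.sqrt (‖c u‖ ^ 2 + h⁻¹ * ‖t u‖ ^ 2) *
              Real.sqrt (‖(v : H)‖ ^ 2 + (‖c v‖ ^ 2 + h⁻¹ * ‖t v‖ ^ 2)) := by
  set C₁ : ℝ := C_inv * C_R with hC1def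
  have hC1 : 0 < C₁ := mul_pos hCinv hCR
  set α : ℝ := (C₁ ^ 2)⁻¹ with hαdef
  have hα : 0 < α := by positivity
  have hαC : α * C₁ * C₁ = 1 := by rw [hαdef]; field_simp
  set μ : ℝ := min (1/2) (α/2) with hμdef
  have hμ : 0 < μ := lt_min (by norm_num) (by positivity)
  set C₂ : ℝ := max (1 + 2*C_T^2) 2 with hC2def
  have hC2 : (0:ℝ) < C₂ := lt_of_lt_of_le (by norm_num) (le_max_right _ _)
  set β₀ : ℝ := μ / C₂ with hβ₀def
  have hβ₀ : 0 < β₀ := div_pos hμ hC2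
  set C₅ : ℝ := Real.sqrt ((C_P^2 + 1) * (3 + 2*α)) with hC5def
  have hC5 : 0 < C₅ := Real.sqrt_pos.mpr (by positivity)
  have hC5sq : C₅^2 = (C_P^2 + 1) * (3 + 2*α) := Real.sq_sqrt (by positivity)
  refine ⟨β₀ / C₅, div_pos hβ₀ hC5, ?_⟩
  intro h hh0 hh1 H _ _ B _ _ X c t s M P R hMcomp hP hker hR hinv htr hpoin u
  have hhne : h ≠ 0 := ne_of_gt hh0
  -- the square root of h
  set q : ℝ := h ^ ((1:ℝ)/2) with hqdef
  have hq0 : 0 < q := Real.rpow_pos_of_pos hh0 _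
  have hq2 : q * q = h := by
    rw [hqdef, ← Real.rpow_add hh0]; norm_num
  set m : ℝ := h⁻¹ with hmdef
  have hm0 : 0 < m := by rw [hmdef]; positivity
  have hmq : m * (q * q) = 1 := by rw [hq2, hmdef]; field_simp
  have h32 : h ^ ((3:ℝ)/2) = h * q := by
    rw [hqdef, show ((3:ℝ)/2) = 1 + 1/2 by norm_num, Real.rpow_add hh0, Real.rpow_one]
  -- names
  set p : B := P (t u) with hpdef
  set r : X := R p with hrdef
  obtain ⟨hsr, htr0, hnr⟩ := hR (t u)
  rw [← hpdef] at hsr htr0 hnr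
  rw [← hrdef] at hsr htr0 hnr
  set k : ℝ := α * m with hkdef
  have hk0 : 0 < k := by rw [hkdef]; positivity
  set v : X := u + k • r with hvdef
  obtain ⟨w, hcw, htw, hw⟩ := hpoin v
  have hsw : s w = 0 := hker w hcw
  refine ⟨v - w, ?_⟩
  -- components of v - w
  have hcv : c (v - w) = c u + k • c r := by
    rw [map_sub, hcw, sub_zero, hvdef, map_add, map_smul]
  have htv : t (v - w) = t u := by
    rw [map_sub, htw, sub_zero, hvdef, map_add, map_smul, htr0, smul_zero, add_zero]
  have hsv : s (v - w) = s u + k • p := by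
    rw [map_sub, hsw, sub_zero, hvdef, map_add, map_smul, hsr]
  -- inner product of p with t u
  have hPtu : ⟪p, t u⟫ = ‖p‖^2 := by
    have h0 := (hP (t u)).2 (P (t u)) (hP (t u)).1
    rw [← hpdef] at h0
    rw [inner_sub_left] at h0
    rw [real_inner_comm, ← real_inner_self_eq_norm_sq]
    linarith
  have hPle : ‖p‖ ≤ ‖t u‖ := by
    have h1 : ⟪p, t u⟫ ≤ ‖p‖ * ‖t u‖ := real_inner_le_norm _ _
    rw [hPtu] at h1
    rcases (norm_nonneg p).eq_or_lt with h0 | h0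
    · rw [← h0]; exact norm_nonneg _
    · refine le_of_mul_le_mul_right ?_ h0
      calc ‖p‖ * ‖p‖ = ‖p‖^2 := by ring
      _ ≤ ‖p‖ * ‖t u‖ := h1
      _ = ‖t u‖ * ‖p‖ := by ring
  -- value of the bilinear form
  have hval : ⟪c u, c (v - w)⟫ - ⟪s u, t (v - w)⟫ + ⟪s (v - w), t u⟫
      = ‖c u‖^2 + k * ⟪c u, c r⟫ + k * ‖p‖^2 := by
    rw [hcv, htv, hsv, inner_add_right, inner_add_left, real_inner_smul_right,
      real_inner_smul_left, real_inner_self_eq_norm_sq, hPtu]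
    ring
  set A : ℝ := ‖c u‖ with hAdef
  set Pn : ℝ := ‖p‖ with hPndef
  set Tn : ℝ := ‖t u‖ with hTndef
  have hA0 : 0 ≤ A := norm_nonneg _
  have hPn0 : 0 ≤ Pn := norm_nonneg _
  have hTn0 : 0 ≤ Tn := norm_nonneg _
  -- bound on c r
  have hcr : ‖c r‖ ≤ C₁ * q * Pn := by
    calc ‖c r‖ ≤ C_inv * m * ‖(r : H)‖ := hinv r
    _ ≤ C_inv * m * (C_R * (h * q) * Pn) := by
        refine mul_le_mul_of_nonneg_left ?_ (by positivity)
        rw [← h32]; exact hnr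
    _ = C₁ * q * Pn := by
        rw [hC1def, hmdef]; field_simp
  -- bound on the inner product term
  have hI : ⟪c u, c r⟫ ≥ -(A * (C₁ * q * Pn)) := by
    have h1 : |⟪c u, c r⟫| ≤ ‖c u‖ * ‖c r‖ := abs_real_inner_le_norm _ _
    have h2 : ‖c u‖ * ‖c r‖ ≤ A * (C₁ * q * Pn) :=
      mul_le_mul_of_nonneg_left hcr hA0
    have h3 := neg_abs_le ⟪c u, c r⟫
    linarith
  -- key algebraic identity
  have hX : (α * m * C₁ * q)^2 = α * m := by
    calc (α * m * C₁ * q)^2 = (α * C₁ * C₁) * (m * (q * q)) * (α * m) := by ring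
    _ = α * m := by rw [hαC, hmq]; ring
  -- step A : coercivity-type lower bound
  have hstepA : A^2 + k * ⟪c u, c r⟫ + k * Pn^2 ≥ μ * (A^2 + m * Pn^2) := by
    rw [hkdef]
    exact nitsche_auxA α m C₁ q A Pn _ μ hα hm0 hA0 hPn0 hX hI
      (min_le_left _ _) (min_le_right _ _)
  -- step B : control of the full seminorm by A and Pn
  have hTnle : Tn ≤ Pn + C_T * q * A := by
    have h4 := norm_add_le p (t u - p)
    have h5 : p + (t u - p) = t u := by abel
    rw [h5] at h4
    have htru := htr u
    rw [← hpdef] at htru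
    linarith [h4, htru]
  have hSB : A^2 + m * Tn^2 ≤ C₂ * (A^2 + m * Pn^2) := by
    rw [hC2def]
    exact nitsche_auxB C_T m q A Pn Tn hCT hm0 hq0 hmq hA0 hPn0 hTn0 hTnle
  -- combined lower bound
  set S : ℝ := A^2 + m * Tn^2 with hSdef
  have hS0 : 0 ≤ S := by rw [hSdef]; positivity
  have hLB : A^2 + k * ⟪c u, c r⟫ + k * Pn^2 ≥ β₀ * S := by
    have hbc : β₀ * C₂ = μ := div_mul_cancel₀ μ hC2.ne'
    have h12 := mul_le_mul_of_nonneg_left hSB hβ₀.le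
    have h13 : β₀ * (C₂ * (A^2 + m * Pn^2)) = μ * (A^2 + m * Pn^2) := by
      rw [← hbc]; ring
    linarith [hstepA, h12, h13]
  -- step C : upper bound for the test function norm
  set E : ℝ := ‖c (v - w)‖ with hEdef
  set N : ℝ := ‖((v - w : X) : H)‖ with hNdef
  have hE0 : 0 ≤ E := norm_nonneg _
  have hN0 : 0 ≤ N := norm_nonneg _
  have hEbound : E ≤ A + α*m*C₁*q*Pn := by
    calc E = ‖c u + k • c r‖ := by rw [hEdef, hcv]
    _ ≤ ‖c u‖ + ‖k • c r‖ := norm_add_le _ _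
    _ = A + k * ‖c r‖ := by rw [norm_smul, Real.norm_eq_abs, abs_of_pos hk0]
    _ ≤ A + k * (C₁*q*Pn) := by
        have := mul_le_mul_of_nonneg_left hcr hk0.le; linarith
    _ = A + α*m*C₁*q*Pn := by rw [hkdef]; ring
  have hD0 : (0:ℝ) ≤ E^2 + m * Tn^2 := by positivity
  have hD : E^2 + m * Tn^2 ≤ (3 + 2*α) * S := by
    rw [hSdef]
    exact nitsche_auxD α m C₁ q A Pn Tn E hα hm0 hA0 hPn0 hTn0 hX hE0 hEbound hPle
  have hN2 : N^2 ≤ C_P^2 * (E^2 + m * Tn^2) := by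
    have hwv : N ≤ C_P * Real.sqrt (E^2 + m * Tn^2) := by
      have hcveq : ‖c v‖ = E := by
        rw [hEdef, hcv, hvdef, map_add, map_smul]
      have htveq : ‖t v‖ = Tn := by
        rw [hTndef, hvdef, map_add, map_smul, htr0, smul_zero, add_zero]
      rw [hNdef]
      calc ‖((v - w : X) : H)‖ ≤ C_P * Real.sqrt (‖c v‖^2 + m * ‖t v‖^2) := hw
      _ = C_P * Real.sqrt (E^2 + m * Tn^2) := by rw [hcveq, htveq]
    have h9 : N^2 ≤ (C_P * Real.sqrt (E^2 + m * Tn^2))^2 := pow_le_pow_left₀ hN0 hwv 2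
    rwa [mul_pow, Real.sq_sqrt hD0] at h9
  have hT : N^2 + (E^2 + m * Tn^2) ≤ C₅^2 * S := by
    rw [hC5sq]
    exact nitsche_auxT C_P (3 + 2*α) N (E^2 + m * Tn^2) S hCP (by positivity)
      hD0 hS0 hN2 hD
  -- conclusion
  rw [hval, htv]
  have hsqrtS : Real.sqrt S * Real.sqrt S = S := Real.mul_self_sqrt hS0
  have hsqrtT : Real.sqrt (N^2 + (E^2 + m * Tn^2)) ≤ C₅ * Real.sqrt S := by
    have h10 : C₅ * Real.sqrt S = Real.sqrt (C₅^2 * S) := by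
      rw [Real.sqrt_mul (sq_nonneg _), Real.sqrt_sq hC5.le]
    rw [h10]
    exact Real.sqrt_le_sqrt hT
  have hfin : β₀ / C₅ * Real.sqrt S * Real.sqrt (N^2 + (E^2 + m * Tn^2)) ≤ β₀ * S := by
    have h11 : β₀ / C₅ * Real.sqrt S * Real.sqrt (N^2 + (E^2 + m * Tn^2))
        ≤ β₀ / C₅ * Real.sqrt S * (C₅ * Real.sqrt S) :=
      mul_le_mul_of_nonneg_left hsqrtT (by positivity)
    calc β₀ / C₅ * Real.sqrt S * Real.sqrt (N^2 + (E^2 + m * Tn^2))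
        ≤ β₀ / C₅ * Real.sqrt S * (C₅ * Real.sqrt S) := h11
    _ = β₀ * (Real.sqrt S * Real.sqrt S) * (C₅ / C₅) := by ring
    _ = β₀ * S := by rw [hsqrtS, div_self hC5.ne']; ring
  calc β₀ / C₅ * Real.sqrt S * Real.sqrt (N^2 + (E^2 + m * Tn^2)) ≤ β₀ * S := hfin
  _ ≤ A^2 + k * ⟪c u, c r⟫ + k * Pn^2 := hLB
end

section
/- For all constants C₁, C₂, C₃ > 0 there exist β > 0 and γ > 0, depending only on C₁, C₂, C₃, such that the following holds. Let H be a real inner product space, X a linear subspace of H, |·| a seminorm on X, and set ‖u‖ₕ² := ‖u‖_H² + |u|² for u ∈ X. Let Q be a real vector space, G : Q → X a linear map, and a : X × X → ℝ a bilinear form. Assume: (1) for every u ∈ X there exists ũ ∈ X with a(u, ũ) ≥ C₁ |u|² and ‖ũ‖ₕ ≤ C₂ |u|; (2) a(u, G q) = 0 and |G q| = 0 for all u ∈ X and q ∈ Q; (3) for every u ∈ X there exists r ∈ Q with ‖u − G r‖_H ≤ C₃ |u|. Define B((u,p),(v,q)) := a(u,v) + ⟨G p, v⟩_H + ⟨G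 q, u⟩_H and ‖(u,p)‖² := ‖u‖ₕ² + ‖G p‖_H². Then for every (u,p) ∈ X × Q there exists (v,q) ∈ X × Q with ‖(v,q)‖ ≤ γ ‖(u,p)‖ and B((u,p),(v,q)) ≥ β ‖(u,p)‖². -/
open scoped RealInnerProductSpace

set_option maxHeartbeats 1000000

private lemma aux_sq_le (a b : ℝ) (ha : 0 ≤ a) (hb : 0 ≤ b) (h : a ^ 2 ≤ b ^ 2) :
    a ≤ b := by nlinarith

private lemma aux_two (a b : ℝ) : (a + b) ^ 2 ≤ 2 * a ^ 2 + 2 * b ^ 2 := by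
  nlinarith [sq_nonneg (a - b)]

private lemma aux_key1 (c₁ c₂ T S P : ℝ) (h1 : 0 < c₁) (ht : T * c₁ = c₂ ^ 2 + c₁) :
    3 * c₁ / 4 * S ^ 2 + P ^ 2 ≤ c₁ * S ^ 2 - c₂ * S * P + T * P ^ 2 := by
  have h3 : T * c₁ * P ^ 2 = (c₂ ^ 2 + c₁) * P ^ 2 := by rw [ht]
  nlinarith [sq_nonneg (c₁ * S - 2 * c₂ * P), h3, sq_nonneg P]

private lemma aux_key2 (s c S R : ℝ) (hs : 0 ≤ s) :
    s / 2 * R ^ 2 - s * c ^ 2 / 2 * S ^ 2 ≤ s * R ^ 2 - s * (c * S * R) := by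
  nlinarith [mul_nonneg hs (sq_nonneg (R - c * S))]

private lemma aux_U2 (c S U R D : ℝ) (hU : 0 ≤ U) (hUle : U ≤ D + R) (hD : D ≤ c * S) :
    U ^ 2 ≤ 2 * c ^ 2 * S ^ 2 + 2 * R ^ 2 := by
  have h1 : (0:ℝ) ≤ c * S + R - U := by linarith
  have h2 : (0:ℝ) ≤ c * S + R + U := by linarith
  nlinarith [mul_nonneg h1 h2, sq_nonneg (c * S - R)]

/-- Abstract inf-sup stability of the saddle-point bilinear form
`B((u,p),(v,q)) = a(u,v) + ⟪G p, v⟫ + ⟪G q, u⟫` for the curl-elliptic problem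
(paper's Lemma 4.2). -/
theorem saddle_point_infsup (C₁ C₂ C₃ : ℝ) (hC₁ : 0 < C₁) (hC₂ : 0 < C₂) (hC₃ : 0 < C₃) :
    ∃ β γ : ℝ, 0 < β ∧ 0 < γ ∧
      ∀ (H : Type) [NormedAddCommGroup H] [InnerProductSpace ℝ H]
        (X : Submodule ℝ H) (sn : Seminorm ℝ X)
        (Q : Type) [AddCommGroup Q] [Module ℝ Q]
        (G : Q →ₗ[ℝ] X) (a : X →ₗ[ℝ] X →ₗ[ℝ] ℝ),
        -- (1) inf-sup property of `a` w.r.t. the seminorm `sn` and the norm `‖·‖ₕ`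
        (∀ u : X, ∃ u' : X, a u u' ≥ C₁ * (sn u) ^ 2 ∧
            Real.sqrt (‖(u' : H)‖ ^ 2 + (sn u') ^ 2) ≤ C₂ * sn u) →
        -- (2) `a` annihilates the range of `G`, on which `sn` vanishes
        (∀ (u : X) (q : Q), a u (G q) = 0 ∧ sn (G q) = 0) →
        -- (3) discrete Poincaré inequality
        (∀ u : X, ∃ r : Q, ‖((u - G r : X) : H)‖ ≤ C₃ * sn u) →
        -- conclusion
        ∀ (u : X) (p : Q), ∃ (v : X) (q : Q),
          Real.sqrt (‖(v : H)‖ ^ 2 + (sn v) ^ 2 + ‖((G q : X) : H)‖ ^ 2) ≤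
            γ * Real.sqrt (‖(u : H)‖ ^ 2 + (sn u) ^ 2 + ‖((G p : X) : H)‖ ^ 2) ∧
          a u v + ⟪((G p : X) : H), (v : H)⟫ + ⟪((G q : X) : H), (u : H)⟫ ≥
            β * (‖(u : H)‖ ^ 2 + (sn u) ^ 2 + ‖((G p : X) : H)‖ ^ 2) := by
  have ht : (0:ℝ) < C₂ ^ 2 / C₁ + 1 := by positivity
  have hs : (0:ℝ) < C₁ / (2 * C₃ ^ 2) := by positivity
  set t : ℝ := C₂ ^ 2 / C₁ + 1 with ht_def
  set s : ℝ := C₁ / (2 * C₃ ^ 2) with hs_def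
  set K : ℝ := 2 * C₂ ^ 2 + 2 * s ^ 2 * C₃ ^ 2 + 2 * t ^ 2 + 2 * s ^ 2 with hK_def
  have hK : 0 < K := by positivity
  set β : ℝ := min (C₁ / (2 * (2 * C₃ ^ 2 + 1))) (min 1 (s / 4)) with hβ_def
  have hβ : 0 < β := lt_min (by positivity) (lt_min one_pos (by positivity))
  have hγ : (0:ℝ) < K + 1 := by linarith
  -- identities for the chosen constants
  have hts : t * C₁ = C₂ ^ 2 + C₁ := by
    rw [ht_def]; field_simp
  have hsc : s * C₃ ^ 2 = C₁ / 2 := by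
    rw [hs_def]; field_simp
  have hb1 : β * (2 * C₃ ^ 2 + 1) ≤ C₁ / 2 := by
    have h := min_le_left (C₁ / (2 * (2 * C₃ ^ 2 + 1))) (min 1 (s / 4))
    rw [← hβ_def] at h
    have h2 : β * (2 * (2 * C₃ ^ 2 + 1)) ≤ C₁ := by
      rw [← le_div_iff₀ (by positivity)]; exact h
    linarith only [h2]
  have hb2 : β ≤ 1 := le_trans (min_le_right _ _) (min_le_left _ _)
  have hb3 : β ≤ s / 4 := le_trans (min_le_right _ _) (min_le_right _ _)
  -- parameter-level bounds for the norm estimate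
  have g1 : 2 * C₂ ^ 2 + 2 * s ^ 2 * C₃ ^ 2 ≤ (K + 1) ^ 2 := by
    nlinarith [sq_nonneg K, sq_nonneg t, sq_nonneg s, hK.le]
  have g2 : 2 * t ^ 2 ≤ (K + 1) ^ 2 := by
    nlinarith [sq_nonneg K, sq_nonneg s, sq_nonneg (s * C₃), sq_nonneg C₂, hK.le]
  have g3 : 2 * s ^ 2 ≤ (K + 1) ^ 2 := by
    nlinarith [sq_nonneg K, sq_nonneg t, sq_nonneg (s * C₃), sq_nonneg C₂, hK.le]
  clear_value t s K β
  refine ⟨β, K + 1, hβ, hγ, ?_⟩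
  intro H _ _ X sn Q _ _ G a h1 h2 h3 u p
  obtain ⟨u', hau', hu'norm⟩ := h1 u
  obtain ⟨r, hr⟩ := h3 u
  -- abbreviations
  set S : ℝ := sn u with hS_def
  set U : ℝ := ‖(u : H)‖ with hU_def
  set P : ℝ := ‖((G p : X) : H)‖ with hP_def
  set R : ℝ := ‖((G r : X) : H)‖ with hR_def
  set N : ℝ := ‖(u' : H)‖ with hN_def
  set SN : ℝ := sn u' with hSN_def
  set D : ℝ := ‖((u - G r : X) : H)‖ with hD_def
  have hSnn : 0 ≤ S := apply_nonneg sn u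
  have hUnn : 0 ≤ U := norm_nonneg _
  have hPnn : 0 ≤ P := norm_nonneg _
  have hRnn : 0 ≤ R := norm_nonneg _
  have hNnn : 0 ≤ N := norm_nonneg _
  have hSNnn : 0 ≤ SN := apply_nonneg sn u'
  have hDnn : 0 ≤ D := norm_nonneg _
  -- squared form of hypothesis (1)
  have hsq : N ^ 2 + SN ^ 2 ≤ (C₂ * S) ^ 2 := by
    have h0 : (0:ℝ) ≤ N ^ 2 + SN ^ 2 := by positivity
    calc N ^ 2 + SN ^ 2 = (Real.sqrt (N ^ 2 + SN ^ 2)) ^ 2 := (Real.sq_sqrt h0).symm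
      _ ≤ (C₂ * S) ^ 2 := by
          apply pow_le_pow_left₀ (Real.sqrt_nonneg _) hu'norm
  have hN : N ≤ C₂ * S := by
    refine aux_sq_le N (C₂ * S) hNnn (by positivity) ?_
    linarith only [hsq, sq_nonneg SN]
  -- coercion facts
  have hsub : ((u - G r : X) : H) = (u : H) - ((G r : X) : H) := by simp
  have hD' : D = ‖(u : H) - ((G r : X) : H)‖ := by rw [hD_def, hsub]
  have hUle : U ≤ D + R := by
    rw [hU_def, hD', hR_def]
    calc ‖(u : H)‖ = ‖((u : H) - ((G r : X) : H)) + ((G r : X) : H)‖ := by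
          rw [sub_add_cancel]
      _ ≤ ‖(u : H) - ((G r : X) : H)‖ + ‖((G r : X) : H)‖ := norm_add_le _ _
  have hRle : R ≤ D + U := by
    rw [hU_def, hD', hR_def]
    calc ‖((G r : X) : H)‖ = ‖((G r : X) : H) - (u : H) + (u : H)‖ := by
          rw [sub_add_cancel]
      _ ≤ ‖((G r : X) : H) - (u : H)‖ + ‖(u : H)‖ := norm_add_le _ _
      _ = ‖(u : H) - ((G r : X) : H)‖ + ‖(u : H)‖ := by rw [norm_sub_rev]
  have hDle : D ≤ C₃ * S := hr
  clear_value S U P R N SN D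
  -- the chosen test pair
  refine ⟨u' + t • (G p), s • r, ?_, ?_⟩
  · -- norm bound
    have hvH : ((u' + t • (G p) : X) : H) = (u' : H) + t • ((G p : X) : H) := by simp
    have hGq : ((G (s • r) : X) : H) = s • ((G r : X) : H) := by
      rw [map_smul]; simp
    have hsnv : sn (u' + t • (G p)) ≤ SN := by
      have h0 : sn (t • (G p)) = 0 := by
        rw [map_smul_eq_mul, (h2 u p).2, mul_zero]
      have h1' := map_add_le_add sn u' (t • (G p))
      rw [h0, ← hSN_def] at h1'
      linarith only [h1']
    have hvnorm : ‖((u' + t • (G p) : X) : H)‖ ≤ N + t * P := by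
      rw [hvH]
      calc ‖(u' : H) + t • ((G p : X) : H)‖ ≤ ‖(u' : H)‖ + ‖t • ((G p : X) : H)‖ :=
            norm_add_le _ _
        _ = N + |t| * P := by rw [norm_smul, Real.norm_eq_abs, ← hN_def, ← hP_def]
        _ = N + t * P := by rw [abs_of_pos ht]
    have hGqnorm : ‖((G (s • r) : X) : H)‖ = s * R := by
      rw [hGq, norm_smul, Real.norm_eq_abs, abs_of_pos hs, ← hR_def]
    -- bound the squared quantity
    have hmain : ‖((u' + t • (G p) : X) : H)‖ ^ 2 + (sn (u' + t • (G p))) ^ 2 +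
        ‖((G (s • r) : X) : H)‖ ^ 2 ≤ (K + 1) ^ 2 * (U ^ 2 + S ^ 2 + P ^ 2) := by
      have e1 : ‖((u' + t • (G p) : X) : H)‖ ^ 2 ≤ 2 * N ^ 2 + 2 * (t * P) ^ 2 :=
        le_trans (pow_le_pow_left₀ (norm_nonneg _) hvnorm 2) (aux_two N (t * P))
      have e2 : (sn (u' + t • (G p))) ^ 2 ≤ SN ^ 2 :=
        pow_le_pow_left₀ (apply_nonneg _ _) hsnv 2
      have e3 : ‖((G (s • r) : X) : H)‖ ^ 2 = s ^ 2 * R ^ 2 := by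
        rw [hGqnorm]; ring
      have e4 : R ^ 2 ≤ 2 * C₃ ^ 2 * S ^ 2 + 2 * U ^ 2 :=
        aux_U2 C₃ S R U D hRnn hRle hDle
      have e5 : s ^ 2 * R ^ 2 ≤ s ^ 2 * (2 * C₃ ^ 2 * S ^ 2 + 2 * U ^ 2) :=
        mul_le_mul_of_nonneg_left e4 (sq_nonneg s)
      have p1 : (2 * C₂ ^ 2 + 2 * s ^ 2 * C₃ ^ 2) * S ^ 2 ≤ (K + 1) ^ 2 * S ^ 2 :=
        mul_le_mul_of_nonneg_right g1 (sq_nonneg S)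
      have p2 : 2 * t ^ 2 * P ^ 2 ≤ (K + 1) ^ 2 * P ^ 2 :=
        mul_le_mul_of_nonneg_right g2 (sq_nonneg P)
      have p3 : 2 * s ^ 2 * U ^ 2 ≤ (K + 1) ^ 2 * U ^ 2 :=
        mul_le_mul_of_nonneg_right g3 (sq_nonneg U)
      linarith only [e1, e2, e3, e5, p1, p2, p3, hsq, sq_nonneg SN]
    calc Real.sqrt (‖((u' + t • (G p) : X) : H)‖ ^ 2 + (sn (u' + t • (G p))) ^ 2 +
          ‖((G (s • r) : X) : H)‖ ^ 2)
        ≤ Real.sqrt ((K + 1) ^ 2 * (U ^ 2 + S ^ 2 + P ^ 2)) := Real.sqrt_le_sqrt hmain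
      _ = (K + 1) * Real.sqrt (U ^ 2 + S ^ 2 + P ^ 2) := by
          rw [Real.sqrt_mul (sq_nonneg _), Real.sqrt_sq hγ.le]
  · -- coercivity bound
    have hvH : ((u' + t • (G p) : X) : H) = (u' : H) + t • ((G p : X) : H) := by simp
    have hGq : ((G (s • r) : X) : H) = s • ((G r : X) : H) := by
      rw [map_smul]; simp
    have hav : a u (u' + t • (G p)) = a u u' := by
      rw [map_add, map_smul, (h2 u p).1, smul_zero, add_zero]
    have hip1 : ⟪((G p : X) : H), ((u' + t • (G p) : X) : H)⟫ =
        ⟪((G p : X) : H), (u' : H)⟫ + t * P ^ 2 := by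
      rw [hvH, inner_add_right, real_inner_smul_right, real_inner_self_eq_norm_sq,
        ← hP_def]
    have hip2 : ⟪((G (s • r) : X) : H), (u : H)⟫ =
        s * (R ^ 2 + ⟪((G r : X) : H), (u : H) - ((G r : X) : H)⟫) := by
      rw [hGq, real_inner_smul_left, inner_sub_right, real_inner_self_eq_norm_sq,
        ← hR_def]
      ring
    set I1 : ℝ := ⟪((G p : X) : H), (u' : H)⟫ with hI1_def
    set I2 : ℝ := ⟪((G r : X) : H), (u : H) - ((G r : X) : H)⟫ with hI2_def
    have hI1 : -(P * N) ≤ I1 := by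
      have h := abs_real_inner_le_norm ((G p : X) : H) (u' : H)
      rw [← hP_def, ← hN_def, ← hI1_def] at h
      linarith [neg_abs_le I1]
    have hI2 : -(R * D) ≤ I2 := by
      have h := abs_real_inner_le_norm ((G r : X) : H) ((u : H) - ((G r : X) : H))
      rw [← hR_def, ← hD', ← hI2_def] at h
      linarith [neg_abs_le I2]
    clear_value I1 I2
    rw [hav, hip1, hip2]
    -- numeric estimates
    have hPN : P * N ≤ C₂ * S * P := by
      calc P * N ≤ P * (C₂ * S) := mul_le_mul_of_nonneg_left hN hPnn
        _ = C₂ * S * P := by ring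
    have hRD : R * D ≤ C₃ * S * R := by
      calc R * D ≤ R * (C₃ * S) := mul_le_mul_of_nonneg_left hDle hRnn
        _ = C₃ * S * R := by ring
    have key1 : 3 * C₁ / 4 * S ^ 2 + P ^ 2 ≤ C₁ * S ^ 2 - C₂ * S * P + t * P ^ 2 :=
      aux_key1 C₁ C₂ t S P hC₁ hts
    have key2' : s / 2 * R ^ 2 - s * C₃ ^ 2 / 2 * S ^ 2 ≤
        s * R ^ 2 - s * (C₃ * S * R) := aux_key2 s C₃ S R hs.le
    have hscS : s * C₃ ^ 2 / 2 * S ^ 2 = C₁ / 4 * S ^ 2 := by rw [hsc]; ring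
    have key2 : s / 2 * R ^ 2 - C₁ / 4 * S ^ 2 ≤ s * R ^ 2 - s * (C₃ * S * R) := by
      rw [← hscS]; exact key2'
    have hU2 : U ^ 2 ≤ 2 * C₃ ^ 2 * S ^ 2 + 2 * R ^ 2 :=
      aux_U2 C₃ S U R D hUnn hUle hDle
    have m1 : β * U ^ 2 ≤ β * (2 * C₃ ^ 2 * S ^ 2 + 2 * R ^ 2) :=
      mul_le_mul_of_nonneg_left hU2 hβ.le
    have m2 : β * (2 * C₃ ^ 2 + 1) * S ^ 2 ≤ C₁ / 2 * S ^ 2 :=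
      mul_le_mul_of_nonneg_right hb1 (sq_nonneg S)
    have m3 : β * P ^ 2 ≤ 1 * P ^ 2 :=
      mul_le_mul_of_nonneg_right hb2 (sq_nonneg P)
    have m4 : β * R ^ 2 ≤ s / 4 * R ^ 2 :=
      mul_le_mul_of_nonneg_right hb3 (sq_nonneg R)
    have key3 : β * (U ^ 2 + S ^ 2 + P ^ 2) ≤
        C₁ / 2 * S ^ 2 + P ^ 2 + s / 2 * R ^ 2 := by
      linarith only [m1, m2, m3, m4]
    have hsI2 : -(s * (C₃ * S * R)) ≤ s * I2 := by
      have h' : s * (-(R * D)) ≤ s * I2 := mul_le_mul_of_nonneg_left hI2 hs.le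
      have h'' : s * (R * D) ≤ s * (C₃ * S * R) := mul_le_mul_of_nonneg_left hRD hs.le
      linarith only [h', h'']
    have hA : C₁ * S ^ 2 ≤ a u u' := hau'
    have hI1' : -(C₂ * S * P) ≤ I1 := by linarith only [hI1, hPN]
    linarith only [hA, hI1', key1, key2, key3, hsI2]
end

section
/- Let C₁, C₂, C_inv > 0 and let h be a real number with 0 < h ≤ 1. Let H and B be real inner product spaces, X ⊆ H a linear subspace, and c : X → H, t : X → B linear maps satisfying the inverse inequality ‖c x‖_H ≤ C_inv · h⁻¹ · ‖x‖_H for every x ∈ X. Assume: (boundary splitting) for every v ∈ X there exists v∂ ∈ X with t(v − v∂) = 0 and ‖v∂‖_H ≤ C₁ · h^{1/2} · ‖t v‖_B; (Hodge–Poincaré property) for every w ∈ X with t w = 0 there exists g ∈ X with c g = 0, t g = 0 and ‖w − g‖_H ≤ C₂ · ‖c w‖_H. Then for every v ∈ X there exists g ∈ X with c g = 0, t g = 0 and ‖v − g‖_H ≤ √2 · (C₂ + C₁ · (1 + C₂ C_inv)) · (‖c v‖_H² + h⁻¹ ‖t v‖_B²)^{1/2}. -/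
set_option maxHeartbeats 1000000 in
/-- Abstract discrete Poincaré inequality (paper's Lemma 3.7): every `v ∈ X` is
approximated by an element of the joint kernel of `c` and `t` up to a constant times
the mesh-dependent seminorm `(‖c v‖² + h⁻¹‖t v‖²)^{1/2}`. -/
theorem discrete_poincare
    (C₁ C₂ C_inv : ℝ) (hC₁ : 0 < C₁) (hC₂ : 0 < C₂) (hCinv : 0 < C_inv)
    (h : ℝ) (hh0 : 0 < h) (hh1 : h ≤ 1)
    {H B : Type*} [NormedAddCommGroup H] [InnerProductSpace ℝ H]
    [NormedAddCommGroup B] [InnerProductSpace ℝ B]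
    (X : Submodule ℝ H) (c : X →ₗ[ℝ] H) (t : X →ₗ[ℝ] B)
    -- inverse inequality
    (hinv : ∀ x : X, ‖c x‖ ≤ C_inv * h⁻¹ * ‖(x : H)‖)
    -- boundary splitting
    (hsplit : ∀ v : X, ∃ vb : X, t (v - vb) = 0 ∧
        ‖(vb : H)‖ ≤ C₁ * h ^ ((1 : ℝ) / 2) * ‖t v‖)
    -- Hodge–Poincaré property
    (hHodge : ∀ w : X, t w = 0 → ∃ g : X, c g = 0 ∧ t g = 0 ∧
        ‖((w - g : X) : H)‖ ≤ C₂ * ‖c w‖) :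
    ∀ v : X, ∃ g : X, c g = 0 ∧ t g = 0 ∧
      ‖((v - g : X) : H)‖ ≤ Real.sqrt 2 * (C₂ + C₁ * (1 + C₂ * C_inv)) *
        Real.sqrt (‖c v‖ ^ 2 + h⁻¹ * ‖t v‖ ^ 2) := by
  intro v
  obtain ⟨vb, htw, hvb⟩ := hsplit v
  obtain ⟨g, hcg, htg, hg⟩ := hHodge (v - vb) htw
  refine ⟨g, hcg, htg, ?_⟩
  set s := Real.sqrt h with hs
  have hs0 : 0 < s := Real.sqrt_pos.mpr hh0
  have hs2 : s * s = h := Real.mul_self_sqrt hh0.le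
  have hrpow : h ^ ((1 : ℝ) / 2) = s := (Real.sqrt_eq_rpow h).symm
  rw [hrpow] at hvb
  set A := ‖c v‖ with hA
  set T := ‖t v‖ with hT
  clear_value s A T
  have hA0 : 0 ≤ A := hA ▸ norm_nonneg _
  have hT0 : 0 ≤ T := hT ▸ norm_nonneg _
  -- bound on c vb
  have hcvb : ‖c vb‖ ≤ C₁ * C_inv * s⁻¹ * T := by
    have h1 := hinv vb
    have h2 : C_inv * h⁻¹ * ‖(vb : H)‖ ≤ C_inv * h⁻¹ * (C₁ * s * T) := by
      apply mul_le_mul_of_nonneg_left hvb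
      positivity
    have h3 : C_inv * h⁻¹ * (C₁ * s * T) = C₁ * C_inv * s⁻¹ * T := by
      rw [← hs2]
      field_simp
    linarith [h1.trans (h2.trans_eq h3)]
  -- bound on c (v - vb)
  have hcw : ‖c (v - vb)‖ ≤ A + C₁ * C_inv * s⁻¹ * T := by
    have : c (v - vb) = c v - c vb := map_sub c v vb
    rw [this]
    calc ‖c v - c vb‖ ≤ ‖c v‖ + ‖c vb‖ := norm_sub_le _ _
      _ ≤ A + C₁ * C_inv * s⁻¹ * T := by rw [← hA]; linarith
  -- main triangle inequality
  have hsplit' : ‖((v - g : X) : H)‖ ≤ ‖(vb : H)‖ + ‖((v - vb - g : X) : H)‖ := by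
    have : (v - g : X) = vb + (v - vb - g) := by abel
    rw [this]
    push_cast
    exact norm_add_le _ _
  have hstep : ‖((v - g : X) : H)‖ ≤ C₁ * s * T + C₂ * (A + C₁ * C_inv * s⁻¹ * T) := by
    have := hg.trans (mul_le_mul_of_nonneg_left hcw hC₂.le)
    linarith [hsplit'.trans (add_le_add hvb this)]
  -- s ≤ s⁻¹
  have hs1 : s ≤ 1 := by
    rw [hs, show (1:ℝ) = Real.sqrt 1 by simp]
    exact Real.sqrt_le_sqrt hh1
  have hsinv : s ≤ s⁻¹ := by
    have hinv1 : 1 ≤ s⁻¹ := by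
      have := mul_inv_cancel₀ hs0.ne'
      nlinarith [inv_pos.mpr hs0]
    linarith
  set K := C₂ + C₁ * (1 + C₂ * C_inv) with hK
  clear_value K
  have hsT : 0 ≤ s⁻¹ * T := by positivity
  have hstep2 : ‖((v - g : X) : H)‖ ≤ K * (A + s⁻¹ * T) := by
    have h4 : C₁ * s * T ≤ C₁ * (s⁻¹ * T) := by
      have := mul_le_mul_of_nonneg_right hsinv hT0
      nlinarith
    have h5 : C₁ * s * T + C₂ * (A + C₁ * C_inv * s⁻¹ * T) ≤ K * (A + s⁻¹ * T) := by
      rw [hK]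
      nlinarith [mul_nonneg hC₂.le hA0, mul_nonneg hC₁.le hA0, mul_nonneg hC₂.le hsT,
        mul_nonneg (mul_nonneg (mul_nonneg hC₁.le hC₂.le) hCinv.le) hA0]
    linarith
  -- Cauchy-Schwarz step: A + b ≤ √2 √(A² + b²)
  set b := s⁻¹ * T with hb
  clear_value b
  have hb0 : 0 ≤ b := hsT
  have hb2 : b ^ 2 = h⁻¹ * T ^ 2 := by
    have : (s⁻¹) ^ 2 = h⁻¹ := by rw [sq, ← mul_inv, hs2]
    rw [hb, mul_pow, this]
  have hcs : A + b ≤ Real.sqrt 2 * Real.sqrt (A ^ 2 + b ^ 2) := by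
    rw [← Real.sqrt_mul (by norm_num : (0:ℝ) ≤ 2)]
    rw [show A + b = Real.sqrt ((A + b) ^ 2) by rw [Real.sqrt_sq (by linarith)]]
    apply Real.sqrt_le_sqrt
    nlinarith [sq_nonneg (A - b)]
  have hK0 : 0 ≤ K := by rw [hK]; positivity
  calc ‖((v - g : X) : H)‖ ≤ K * (A + b) := hstep2
    _ ≤ K * (Real.sqrt 2 * Real.sqrt (A ^ 2 + b ^ 2)) := mul_le_mul_of_nonneg_left hcs hK0
    _ = Real.sqrt 2 * K * Real.sqrt (A ^ 2 + h⁻¹ * T ^ 2) := by rw [hb2]; ring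
end
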